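/- The Lie algebra L with basis {x, y, e₁, e₂, ...} and nonzero brackets [e_i,e₁] = e_{i+1} (i ≥ 2), [x,e₁] = e₁, [x,e_i] = (i-1)e_i (i ≥ 2), [y,e_i] = e_i (i ≥ 2) satisfies the Jacobi identity, and is potentially solvable but not potentially nilpotent: ⋂_{s≥1} L^{[s]} = 0 while ⋂_{k≥1} L^k ≠ 0. -/

import Mathlib

/-- The free `ℂ`-vector space on `{e_i : i ≥ 1}`. -/
abbrev ESpace := {n : ℕ // 0 < n} →₀ ℂ

/-- The bracket among the `e_i`: `[e_i,e₁] = e_{i+1}` for `i ≥ 2`, all other brackets of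
the `e`'s zero, extended antisymmetrically and bilinearly. -/
noncomputable def ebr (f g : ESpace) : ESpace :=
  f.sum fun i a => g.sum fun j c =>
    (a * c) •
      (if j.1 = 1 ∧ 2 ≤ i.1 then Finsupp.single ⟨i.1 + 1, by omega⟩ (1 : ℂ)
       else if i.1 = 1 ∧ 2 ≤ j.1 then -Finsupp.single ⟨j.1 + 1, by omega⟩ (1 : ℂ)
       else 0)

/-- The action `f ↦ [x, f]`: `[x,e₁] = e₁`, `[x,e_i] = (i-1)e_i` for `i ≥ 2`. -/
noncomputable def Xact (f : ESpace) : ESpace :=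
  f.sum fun i a =>
    (a * (if i.1 = 1 then 1 else (i.1 : ℂ) - 1)) • Finsupp.single i (1 : ℂ)

/-- The action `f ↦ [y, f]`: `[y,e_i] = e_i` for `i ≥ 2`, `[y,e₁] = 0`. -/
noncomputable def Yact (f : ESpace) : ESpace :=
  f.sum fun i a => (a * (if i.1 = 1 then 0 else 1)) • Finsupp.single i (1 : ℂ)

/-- The underlying space of `L = ℂx ⊕ ℂy ⊕ span{e₁,e₂,...}`: `(a,b,f) = a·x + b·y + f`. -/
abbrev LSpace := ℂ × ℂ × ESpace

/-- The bracket of `L` (with `[x,y] = 0`). -/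
noncomputable def lbr (p q : LSpace) : LSpace :=
  (0, 0, ebr p.2.2 q.2.2 + p.1 • Xact q.2.2 + p.2.1 • Yact q.2.2
    - q.1 • Xact p.2.2 - q.2.1 • Yact p.2.2)

/-- The derived series: `dser 0 = L^{[1]} = L`, `dser s = L^{[s+1]} = [L^{[s]}, L^{[s]}]`. -/
noncomputable def dser : ℕ → Submodule ℂ LSpace
  | 0 => ⊤
  | s + 1 => Submodule.span ℂ {w | ∃ u v, u ∈ dser s ∧ v ∈ dser s ∧ w = lbr u v}

/-- The lower central series: `lcs 0 = L¹ = L`, `lcs k = L^{k+1} = [L^k, L]`. -/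
noncomputable def lcs : ℕ → Submodule ℂ LSpace
  | 0 => ⊤
  | k + 1 => Submodule.span ℂ {w | ∃ u v, u ∈ lcs k ∧ w = lbr u v}

/-- the Lie algebra with basis `{x, y, e₁, e₂, ...}` and nonzero brackets
`[e_i,e₁] = e_{i+1}` (`i ≥ 2`), `[x,e₁] = e₁`, `[x,e_i] = (i-1)e_i` (`i ≥ 2`),
`[y,e_i] = e_i` (`i ≥ 2`) satisfies the Jacobi identity, and is potentially solvable
but not potentially nilpotent. -/
abbrev Idx := {n : ℕ // 0 < n}

noncomputable def T (i j : Idx) : ESpace :=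
  if j.1 = 1 ∧ 2 ≤ i.1 then Finsupp.single ⟨i.1 + 1, by omega⟩ (1 : ℂ)
  else if i.1 = 1 ∧ 2 ≤ j.1 then -Finsupp.single ⟨j.1 + 1, by omega⟩ (1 : ℂ)
  else 0

noncomputable def ebrL : ESpace →ₗ[ℂ] ESpace →ₗ[ℂ] ESpace :=
  Finsupp.lsum ℂ fun i => LinearMap.toSpanSingleton ℂ _
    (Finsupp.lsum ℂ fun j => LinearMap.toSpanSingleton ℂ _ (T i j))

lemma ebr_eq (f g : ESpace) : ebr f g = ebrL f g := by
  rw [ebr, ebrL]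
  rw [Finsupp.lsum_apply]
  rw [LinearMap.finsupp_sum_apply]
  apply Finsupp.sum_congr
  intro i _
  rw [LinearMap.toSpanSingleton_apply, LinearMap.smul_apply, Finsupp.lsum_apply]
  rw [Finsupp.smul_sum]
  apply Finsupp.sum_congr
  intro j _
  rw [LinearMap.toSpanSingleton_apply, T, mul_smul]

noncomputable def xc (i : Idx) : ℂ := if i.1 = 1 then 1 else (i.1 : ℂ) - 1

noncomputable def yc (i : Idx) : ℂ := if i.1 = 1 then 0 else 1

noncomputable def XactL : ESpace →ₗ[ℂ] ESpace :=
  Finsupp.lsum ℂ fun i => LinearMap.toSpanSingleton ℂ _ (xc i • Finsupp.single i (1:ℂ))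

noncomputable def YactL : ESpace →ₗ[ℂ] ESpace :=
  Finsupp.lsum ℂ fun i => LinearMap.toSpanSingleton ℂ _ (yc i • Finsupp.single i (1:ℂ))

lemma Xact_eq (f : ESpace) : Xact f = XactL f := by
  rw [Xact, XactL, Finsupp.lsum_apply]
  apply Finsupp.sum_congr
  intro i _
  rw [LinearMap.toSpanSingleton_apply, xc, mul_smul]

lemma Yact_eq (f : ESpace) : Yact f = YactL f := by
  rw [Yact, YactL, Finsupp.lsum_apply]
  apply Finsupp.sum_congr
  intro i _
  rw [LinearMap.toSpanSingleton_apply, yc, mul_smul]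

-- linearity lemmas

lemma ebr_add_left (f f' g : ESpace) : ebr (f + f') g = ebr f g + ebr f' g := by
  simp [ebr_eq]

lemma ebr_add_right (f g g' : ESpace) : ebr f (g + g') = ebr f g + ebr f g' := by
  simp [ebr_eq]

lemma ebr_sub_right (f g g' : ESpace) : ebr f (g - g') = ebr f g - ebr f g' := by
  simp [ebr_eq]

lemma ebr_smul_left (c : ℂ) (f g : ESpace) : ebr (c • f) g = c • ebr f g := by
  simp [ebr_eq]

lemma ebr_smul_right (c : ℂ) (f g : ESpace) : ebr f (c • g) = c • ebr f g := by
  simp [ebr_eq]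

lemma ebr_neg_right (f g : ESpace) : ebr f (-g) = - ebr f g := by
  simp [ebr_eq]

lemma ebr_zero_left (g : ESpace) : ebr 0 g = 0 := by simp [ebr_eq]

lemma ebr_zero_right (f : ESpace) : ebr f 0 = 0 := by simp [ebr_eq]

lemma Xact_add (f g : ESpace) : Xact (f + g) = Xact f + Xact g := by simp [Xact_eq]

lemma Xact_sub (f g : ESpace) : Xact (f - g) = Xact f - Xact g := by simp [Xact_eq]

lemma Xact_smul (c : ℂ) (f : ESpace) : Xact (c • f) = c • Xact f := by simp [Xact_eq]

lemma Xact_neg (f : ESpace) : Xact (-f) = - Xact f := by simp [Xact_eq]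

lemma Xact_zero : Xact 0 = 0 := by simp [Xact_eq]

lemma Yact_add (f g : ESpace) : Yact (f + g) = Yact f + Yact g := by simp [Yact_eq]

lemma Yact_sub (f g : ESpace) : Yact (f - g) = Yact f - Yact g := by simp [Yact_eq]

lemma Yact_smul (c : ℂ) (f : ESpace) : Yact (c • f) = c • Yact f := by simp [Yact_eq]

lemma Yact_neg (f : ESpace) : Yact (-f) = - Yact f := by simp [Yact_eq]

lemma Yact_zero : Yact 0 = 0 := by simp [Yact_eq]

lemma ebr_single_single (i j : Idx) (a c : ℂ) :
    ebr (Finsupp.single i a) (Finsupp.single j c) = (a * c) • T i j := by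
  simp [ebr_eq, ebrL, Finsupp.lsum_single, mul_smul]

lemma Xact_single (i : Idx) (a : ℂ) :
    Xact (Finsupp.single i a) = (a * xc i) • Finsupp.single i (1:ℂ) := by
  simp [Xact_eq, XactL, Finsupp.lsum_single, mul_smul]

lemma Yact_single (i : Idx) (a : ℂ) :
    Yact (Finsupp.single i a) = (a * yc i) • Finsupp.single i (1:ℂ) := by
  simp [Yact_eq, YactL, Finsupp.lsum_single, mul_smul]

lemma T_antisym (i j : Idx) : T j i = - T i j := by
  have hi := i.2; have hj := j.2
  rw [T, T]
  split_ifs with h1 h2 h3 h4 h5 h6 <;> first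
    | omega
    | simp
    | (exfalso; omega)

lemma ebr_antisym (f g : ESpace) : ebr g f = - ebr f g := by
  induction f using Finsupp.induction_linear with
  | zero => simp [ebr_zero_left, ebr_zero_right]
  | add f1 f2 h1 h2 => rw [ebr_add_right, ebr_add_left, h1, h2]; abel
  | single i a =>
    induction g using Finsupp.induction_linear with
    | zero => simp [ebr_zero_left, ebr_zero_right]
    | add g1 g2 h1 h2 => rw [ebr_add_right, ebr_add_left, h1, h2]; abel
    | single j b =>
      rw [ebr_single_single, ebr_single_single, T_antisym]
      rw [mul_comm]; simp

lemma Xact_T (i j : Idx) : Xact (T i j) = (xc i + xc j) • T i j := by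
  have hi := i.2; have hj := j.2
  rw [T]
  split_ifs with h1 h2
  · rw [Xact_single]
    have : xc ⟨i.1 + 1, by omega⟩ = (i.1 : ℂ) := by
      rw [xc, if_neg (show ¬(i.1 + 1 = 1) by omega)]; push_cast; ring
    rw [this, xc, xc, if_pos h1.1, if_neg (by omega)]
    rw [one_mul]
    congr 1; ring
  · rw [Xact_neg, Xact_single]
    have : xc ⟨j.1 + 1, by omega⟩ = (j.1 : ℂ) := by
      rw [xc, if_neg (show ¬(j.1 + 1 = 1) by omega)]; push_cast; ring
    rw [this, xc, xc, if_pos h2.1, if_neg (by omega)]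
    rw [one_mul, smul_neg]
    congr 1; ring
  · simp [Xact_zero]

lemma Yact_T (i j : Idx) : Yact (T i j) = (yc i + yc j) • T i j := by
  have hi := i.2; have hj := j.2
  rw [T]
  split_ifs with h1 h2
  · rw [Yact_single]
    have : yc ⟨i.1 + 1, by omega⟩ = (1 : ℂ) := by
      rw [yc, if_neg (show ¬(i.1 + 1 = 1) by omega)]
    rw [this, yc, yc, if_pos h1.1, if_neg (by omega)]
    norm_num
  · rw [Yact_neg, Yact_single]
    have : yc ⟨j.1 + 1, by omega⟩ = (1 : ℂ) := by
      rw [yc, if_neg (show ¬(j.1 + 1 = 1) by omega)]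
    rw [this, yc, yc, if_pos h2.1, if_neg (by omega)]
    norm_num
  · simp [Yact_zero]

lemma Xact_ebr (f g : ESpace) :
    Xact (ebr f g) = ebr f (Xact g) - ebr g (Xact f) := by
  induction f using Finsupp.induction_linear with
  | zero => simp [ebr_zero_left, ebr_zero_right, Xact_zero]
  | add f1 f2 h1 h2 =>
    rw [ebr_add_left, Xact_add, h1, h2, ebr_add_left, Xact_add, ebr_add_right]
    abel
  | single i a =>
    induction g using Finsupp.induction_linear with
    | zero => simp [ebr_zero_left, ebr_zero_right, Xact_zero]
    | add g1 g2 h1 h2 =>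
      rw [ebr_add_right, Xact_add, h1, h2, Xact_add, ebr_add_right, ebr_add_left]
      abel
    | single j b =>
      rw [ebr_single_single, Xact_smul, Xact_T, Xact_single, Xact_single,
        ebr_smul_right, ebr_smul_right, ebr_single_single, ebr_single_single,
        T_antisym (i := i) (j := j)]
      match_scalars <;> ring

lemma Yact_ebr (f g : ESpace) :
    Yact (ebr f g) = ebr f (Yact g) - ebr g (Yact f) := by
  induction f using Finsupp.induction_linear with
  | zero => simp [ebr_zero_left, ebr_zero_right, Yact_zero]
  | add f1 f2 h1 h2 =>
    rw [ebr_add_left, Yact_add, h1, h2, ebr_add_left, Yact_add, ebr_add_right]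
    abel
  | single i a =>
    induction g using Finsupp.induction_linear with
    | zero => simp [ebr_zero_left, ebr_zero_right, Yact_zero]
    | add g1 g2 h1 h2 =>
      rw [ebr_add_right, Yact_add, h1, h2, Yact_add, ebr_add_right, ebr_add_left]
      abel
    | single j b =>
      rw [ebr_single_single, Yact_smul, Yact_T, Yact_single, Yact_single,
        ebr_smul_right, ebr_smul_right, ebr_single_single, ebr_single_single,
        T_antisym (i := i) (j := j)]
      match_scalars <;> ring

lemma XY_comm (f : ESpace) : Xact (Yact f) = Yact (Xact f) := by
  induction f using Finsupp.induction_linear with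
  | zero => simp [Xact_zero, Yact_zero]
  | add f1 f2 h1 h2 => rw [Yact_add, Xact_add, h1, h2, Xact_add, Yact_add]
  | single i a =>
    rw [Xact_single, Yact_smul, Yact_single, Yact_single, Xact_smul, Xact_single]
    match_scalars; ring

lemma jacobiE_single (i j l : Idx) :
    ebr (Finsupp.single i 1) (ebr (Finsupp.single j 1) (Finsupp.single l 1))
      + ebr (Finsupp.single j 1) (ebr (Finsupp.single l 1) (Finsupp.single i 1))
      + ebr (Finsupp.single l 1) (ebr (Finsupp.single i 1) (Finsupp.single j 1)) = 0 := by
  have hi2 := i.2; have hj2 := j.2; have hl2 := l.2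
  by_cases hi : i.1 = 1 <;> by_cases hj : j.1 = 1 <;> by_cases hl : l.1 = 1 <;>
    simp_all [T, ebr_single_single, ebr_neg_right, ebr_smul_right, ebr_zero_right,
      Nat.two_le_iff, Nat.pos_iff_ne_zero]

lemma jacobiE (f g k : ESpace) :
    ebr f (ebr g k) + ebr g (ebr k f) + ebr k (ebr f g) = 0 := by
  induction f using Finsupp.induction_linear with
  | zero => simp [ebr_zero_left, ebr_zero_right]
  | add f1 f2 h1 h2 =>
    rw [ebr_add_left, ebr_add_right, ebr_add_right, ebr_add_left, ebr_add_right]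
    linear_combination (norm := module) h1 + h2
  | single i a =>
    induction g using Finsupp.induction_linear with
    | zero => simp [ebr_zero_left, ebr_zero_right]
    | add g1 g2 h1 h2 =>
      rw [ebr_add_left, ebr_add_right, ebr_add_right, ebr_add_left, ebr_add_right]
      linear_combination (norm := module) h1 + h2
    | single j b =>
      induction k using Finsupp.induction_linear with
      | zero => simp [ebr_zero_left, ebr_zero_right]
      | add k1 k2 h1 h2 =>
        rw [ebr_add_left, ebr_add_right, ebr_add_right, ebr_add_left, ebr_add_right]
        linear_combination (norm := module) h1 + h2
      | single l c =>
        have hs : ∀ (m : Idx) (d : ℂ),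
            (Finsupp.single m d : ESpace) = d • Finsupp.single m 1 := by
          intro m d; rw [Finsupp.smul_single', mul_one]
        rw [hs i a, hs j b, hs l c]
        simp only [ebr_smul_left, ebr_smul_right]
        linear_combination (norm := module) (a * b * c) • jacobiE_single i j l

lemma lbr_jacobi (p q r : LSpace) :
    lbr p (lbr q r) + lbr q (lbr r p) + lbr r (lbr p q) = 0 := by
  obtain ⟨a, b, f⟩ := p; obtain ⟨c, d, g⟩ := q; obtain ⟨e, hh, k⟩ := r
  simp only [lbr, Prod.mk_add_mk, Prod.mk_eq_zero]
  refine ⟨by ring, by ring, ?_⟩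
  simp only [zero_smul, sub_zero]
  simp only [ebr_add_right, ebr_sub_right, ebr_smul_right,
    Xact_add, Xact_sub, Xact_smul, Yact_add, Yact_sub, Yact_smul,
    Xact_ebr, Yact_ebr, XY_comm]
  linear_combination (norm := module) jacobiE f g k

noncomputable def Ksub : Submodule ℂ ESpace :=
  LinearMap.ker (Finsupp.lapply (⟨1, one_pos⟩ : Idx))

lemma mem_Ksub (f : ESpace) : f ∈ Ksub ↔ f ⟨1, one_pos⟩ = 0 := by
  simp [Ksub, Finsupp.lapply]
  exact Iff.rfl

lemma T_mem_Ksub (i j : Idx) : T i j ∈ Ksub := by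
  rw [mem_Ksub, T]
  split_ifs with h1 h2 <;>
    simp only [Finsupp.coe_neg, Pi.neg_apply, Finsupp.single_apply, Subtype.mk.injEq,
      Finsupp.coe_zero, Pi.zero_apply, neg_eq_zero, ite_eq_right_iff, one_ne_zero, imp_false] <;> omega

lemma ebr_mem_Ksub (f g : ESpace) : ebr f g ∈ Ksub := by
  rw [ebr]
  apply Submodule.finsuppSum_mem
  intro i _
  apply Submodule.finsuppSum_mem
  intro j _
  exact Submodule.smul_mem _ _ (T_mem_Ksub i j)

lemma ebr_eq_zero_of_Ksub {f g : ESpace} (hf : f ∈ Ksub) (hg : g ∈ Ksub) :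
    ebr f g = 0 := by
  rw [mem_Ksub] at hf hg
  rw [ebr, Finsupp.sum]
  apply Finset.sum_eq_zero
  intro i hi
  rw [Finsupp.sum]
  apply Finset.sum_eq_zero
  intro j hj
  have hi1 : i.1 ≠ 1 := by
    intro h
    have : i = ⟨1, one_pos⟩ := Subtype.ext h
    rw [this] at hi
    exact (Finsupp.mem_support_iff.mp hi) hf
  have hj1 : j.1 ≠ 1 := by
    intro h
    have : j = ⟨1, one_pos⟩ := Subtype.ext h
    rw [this] at hj
    exact (Finsupp.mem_support_iff.mp hj) hg
  rw [if_neg (by tauto), if_neg (by tauto), smul_zero]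

noncomputable def Nsub : Submodule ℂ LSpace :=
  (⊥ : Submodule ℂ ℂ).prod ((⊥ : Submodule ℂ ℂ).prod ⊤)

noncomputable def Msub : Submodule ℂ LSpace :=
  (⊥ : Submodule ℂ ℂ).prod ((⊥ : Submodule ℂ ℂ).prod Ksub)

lemma dser1_le : dser 1 ≤ Nsub := by
  rw [dser, Submodule.span_le]
  rintro w ⟨u, v, -, -, rfl⟩
  simp [lbr, Nsub]

lemma dser2_le : dser 2 ≤ Msub := by
  rw [dser, Submodule.span_le]
  rintro w ⟨u, v, hu, hv, rfl⟩
  have hu' := dser1_le hu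
  have hv' := dser1_le hv
  simp only [Nsub, Submodule.mem_prod, Submodule.mem_bot] at hu' hv'
  simp only [Msub, lbr, Submodule.mem_prod, Submodule.mem_bot, Set.mem_setOf_eq]
  refine ⟨rfl, rfl, ?_⟩
  rw [hu'.1, hu'.2.1, hv'.1, hv'.2.1]
  simp only [zero_smul, add_zero, sub_zero]
  exact ebr_mem_Ksub _ _

lemma dser3_eq_bot : dser 3 = ⊥ := by
  rw [eq_bot_iff, dser, Submodule.span_le]
  rintro w ⟨u, v, hu, hv, rfl⟩
  have hu' := dser2_le hu
  have hv' := dser2_le hv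
  simp only [Msub, Submodule.mem_prod, Submodule.mem_bot] at hu' hv'
  simp only [SetLike.mem_coe, Submodule.mem_bot, lbr, Prod.mk_eq_zero]
  refine ⟨trivial, trivial, ?_⟩
  rw [hu'.1, hu'.2.1, hv'.1, hv'.2.1, ebr_eq_zero_of_Ksub hu'.2.2 hv'.2.2]
  simp

lemma e2_mem_lcs (k : ℕ) :
    ((0:ℂ), (0:ℂ), Finsupp.single (⟨2, by norm_num⟩ : Idx) (1:ℂ)) ∈ lcs k := by
  induction k with
  | zero => exact Submodule.mem_top
  | succ k ih =>
    rw [lcs]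
    have hgen : ((0:ℂ), (0:ℂ), -Finsupp.single (⟨2, by norm_num⟩ : Idx) (1:ℂ))
        ∈ {w | ∃ u v, u ∈ lcs k ∧ w = lbr u v} := by
      refine ⟨_, ((0:ℂ), (1:ℂ), (0:ESpace)), ih, ?_⟩
      simp [lbr, ebr_zero_right, Xact_zero, Yact_zero, Yact_single, yc]
      show (Finsupp.single (⟨2, by norm_num⟩ : Idx) (1:ℂ)) = Yact (Finsupp.single (⟨2, by norm_num⟩ : Idx) 1)
      rw [Yact_single, yc, if_neg (by norm_num), mul_one, one_smul]
    have := Submodule.subset_span (R := ℂ) hgen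
    have h2 := Submodule.neg_mem _ this
    simpa using h2

theorem statement18 :
    (∀ p q r : LSpace, lbr p (lbr q r) + lbr q (lbr r p) + lbr r (lbr p q) = 0) ∧
    (⨅ s, dser s = ⊥) ∧
    (⨅ k, lcs k ≠ ⊥) := by
  refine ⟨lbr_jacobi, ?_, ?_⟩
  · exact le_antisymm (le_trans (iInf_le _ 3) (le_of_eq dser3_eq_bot)) bot_le
  · intro hbot
    have hmem : ((0:ℂ), (0:ℂ), Finsupp.single (⟨2, by norm_num⟩ : Idx) (1:ℂ))
        ∈ ⨅ k, lcs k := Submodule.mem_iInf _ |>.mpr e2_mem_lcs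
    rw [hbot, Submodule.mem_bot] at hmem
    have h2 := congrArg (fun p : LSpace => p.2.2) hmem
    simp only at h2
    exact one_ne_zero (Finsupp.single_eq_zero.mp h2)
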